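/- Let n be a positive integer, w ∈ ℝⁿ, and λ > 0. Suppose α* > 0 and b* ∈ {−1,0,1}ⁿ jointly minimize (λ/2)·Σᵢ(α bᵢ − wᵢ)² over all α > 0 and b ∈ {−1,0,1}ⁿ, with b* not identically zero and |wᵢ| ≠ α*/2 for all i. Set Δ* = α*/2. Then: (a) α* = (Σ_{i : |wᵢ| > Δ*} |wᵢ|) / #{i : |wᵢ| > Δ*}; and (b) for every Δ > 0 such that {i : |wᵢ| > Δ} is nonempty, (Σ_{i:|wᵢ|>Δ} |wᵢ|)² / #{i : |wᵢ| > Δ} ≤ (Σ_{i:|wᵢ|>Δ*} |wᵢ|)² / #{i : |wᵢ| > Δ*}. (Corollary 1: when the approximate Hessian is a multiple of the identity, D = λI, the loss-aware ternarization optimum reduces to the TWN solution with threshold Δ = α/2: the threshold maximizes (Σ_{|wᵢ|>Δ}|wᵢ|)²/‖I_Δ(w)‖₁ and α is the mean of the surviving |wᵢ|.) -/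

import Mathlib

lemma aux_sum (n : ℕ) (w : Fin n → ℝ) (Δ α : ℝ) (b : Fin n → ℝ)
    (hb1 : ∀ i, Δ < |w i| → b i * w i = |w i| ∧ b i ^ 2 = 1)
    (hb0 : ∀ i, ¬ Δ < |w i| → b i = 0) :
    ∑ i, (α * b i - w i)^2
      = (∑ i, (w i)^2)
        - 2*α*(∑ i ∈ Finset.univ.filter (fun i => |w i| > Δ), |w i|)
        + α^2 * ((Finset.univ.filter (fun i : Fin n => |w i| > Δ)).card : ℝ) := by
  classical
  rw [← Finset.sum_filter_add_sum_filter_not Finset.univ (fun i => |w i| > Δ)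
        (fun i => (α * b i - w i)^2),
      ← Finset.sum_filter_add_sum_filter_not Finset.univ (fun i => |w i| > Δ)
        (fun i => (w i)^2)]
  have hA : ∑ i ∈ Finset.univ.filter (fun i => |w i| > Δ), (α * b i - w i)^2
      = ∑ i ∈ Finset.univ.filter (fun i => |w i| > Δ), ((w i)^2 - 2*α*|w i| + α^2) := by
    refine Finset.sum_congr rfl fun i hi => ?_
    obtain ⟨h1, h2⟩ := hb1 i (Finset.mem_filter.mp hi).2
    linear_combination α^2 * h2 - 2*α*h1
  have hB : ∑ i ∈ Finset.univ.filter (fun i => ¬ |w i| > Δ), (α * b i - w i)^2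
      = ∑ i ∈ Finset.univ.filter (fun i => ¬ |w i| > Δ), (w i)^2 := by
    refine Finset.sum_congr rfl fun i hi => ?_
    rw [hb0 i (Finset.mem_filter.mp hi).2]
    ring
  rw [hA, hB, Finset.sum_add_distrib, Finset.sum_sub_distrib, ← Finset.mul_sum,
      Finset.sum_const, nsmul_eq_mul]
  ring

lemma aux_card_le_sum (n : ℕ) (w : Fin n → ℝ) (Δ : ℝ) :
    ((Finset.univ.filter (fun i : Fin n => |w i| > Δ)).card : ℝ) * Δ
      ≤ ∑ i ∈ Finset.univ.filter (fun i => |w i| > Δ), |w i| := by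
  rw [← nsmul_eq_mul]
  exact Finset.card_nsmul_le_sum _ _ _ (fun i hi => le_of_lt (Finset.mem_filter.mp hi).2)

set_option maxHeartbeats 1000000

/-- Corollary 1: when the approximate Hessian is a multiple of the identity,
`D = λ I`, the nondegenerate loss-aware ternarization optimum reduces to the TWN
solution with threshold `Δ* = α*/2`: (a) `α*` is the mean of the surviving `|w i|`,
and (b) the threshold `Δ*` maximizes `(∑_{|w i|>Δ} |w i|)² / #{i : |w i| > Δ}`. -/
theorem stmt_7 (n : ℕ) (hn : 0 < n) (w : Fin n → ℝ) (lam : ℝ) (hlam : 0 < lam)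
    (αstar : ℝ) (hαpos : 0 < αstar)
    (bstar : Fin n → ℝ) (hbstar : ∀ i, bstar i ∈ ({-1, 0, 1} : Set ℝ))
    (hmin : ∀ α : ℝ, 0 < α → ∀ b : Fin n → ℝ, (∀ i, b i ∈ ({-1, 0, 1} : Set ℝ)) →
      (lam / 2) * ∑ i, (αstar * bstar i - w i)^2
        ≤ (lam / 2) * ∑ i, (α * b i - w i)^2)
    (hnz : ∃ i, bstar i ≠ 0)
    (hne : ∀ i, |w i| ≠ αstar / 2) :
    (αstar = (∑ i ∈ Finset.univ.filter (fun i => |w i| > αstar / 2), |w i|) /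
        ((Finset.univ.filter (fun i : Fin n => |w i| > αstar / 2)).card : ℝ)) ∧
    (∀ Δ : ℝ, 0 < Δ → (Finset.univ.filter (fun i : Fin n => |w i| > Δ)).Nonempty →
      (∑ i ∈ Finset.univ.filter (fun i => |w i| > Δ), |w i|)^2 /
          ((Finset.univ.filter (fun i : Fin n => |w i| > Δ)).card : ℝ)
        ≤ (∑ i ∈ Finset.univ.filter (fun i => |w i| > αstar / 2), |w i|)^2 /
          ((Finset.univ.filter (fun i : Fin n => |w i| > αstar / 2)).card : ℝ)) := by
  classical
  have hmin' : ∀ α : ℝ, 0 < α → ∀ b : Fin n → ℝ, (∀ i, b i ∈ ({-1, 0, 1} : Set ℝ)) →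
      ∑ i, (αstar * bstar i - w i)^2 ≤ ∑ i, (α * b i - w i)^2 := by
    intro α hα b hb
    have h2 : (0:ℝ) < lam / 2 := by linarith
    exact le_of_mul_le_mul_left (hmin α hα b hb) h2
  -- per-coordinate optimality of bstar at α = αstar
  have hpc : ∀ i : Fin n, ∀ b : ℝ, b ∈ ({-1, 0, 1} : Set ℝ) →
      (αstar * bstar i - w i)^2 ≤ (αstar * b - w i)^2 := by
    intro i b hb
    have hmem : ∀ j, Function.update bstar i b j ∈ ({-1, 0, 1} : Set ℝ) := by
      intro j
      rcases eq_or_ne j i with rfl | h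
      · simpa using hb
      · rw [Function.update_of_ne h]; exact hbstar j
    have h := hmin' αstar hαpos _ hmem
    have hsum : ∑ j, (αstar * Function.update bstar i b j - w j)^2
        = (αstar * b - w i)^2
          + ∑ j ∈ Finset.univ.erase i, (αstar * bstar j - w j)^2 := by
      rw [← Finset.add_sum_erase _ _ (Finset.mem_univ i)]
      congr 1
      · simp
      · exact Finset.sum_congr rfl fun j hj => by
          rw [Function.update_of_ne (Finset.ne_of_mem_erase hj)]
    rw [hsum, ← Finset.add_sum_erase _ (fun j => (αstar * bstar j - w j)^2)
      (Finset.mem_univ i)] at h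
    linarith
  -- characterization of bstar
  have hchar : ∀ i : Fin n,
      (αstar/2 < |w i| → bstar i * w i = |w i| ∧ bstar i ^ 2 = 1) ∧
      (¬ αstar/2 < |w i| → bstar i = 0) := by
    intro i
    have h1 := hpc i 1 (by simp)
    have hm1 := hpc i (-1) (by norm_num)
    have h0 := hpc i 0 (by norm_num)
    have hbi : bstar i = -1 ∨ bstar i = 0 ∨ bstar i = 1 := by
      have := hbstar i; simpa using this
    have hlt : ¬ αstar/2 < |w i| → |w i| < αstar/2 := fun h =>
      lt_of_le_of_ne (not_lt.mp h) (hne i)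
    rcases le_or_gt 0 (w i) with hw | hw
    · rw [abs_of_nonneg hw] at *
      constructor
      · intro hgt
        rcases hbi with h | h | h
        · exfalso; rw [h] at h1; nlinarith
        · exfalso; rw [h] at h1; nlinarith
        · rw [h]; constructor <;> ring
      · intro hlt'
        have hlt'' := hlt hlt'
        rcases hbi with h | h | h
        · exfalso; rw [h] at h0; nlinarith
        · exact h
        · exfalso; rw [h] at h0; nlinarith
    · constructor
      · intro hgt
        rw [abs_of_neg hw] at hgt
        rcases hbi with h | h | h
        · rw [h]; constructor <;> [skip; ring]
          rw [abs_of_neg hw]; ring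
        · exfalso; rw [h] at hm1; nlinarith
        · exfalso; rw [h] at hm1; nlinarith
      · intro hlt'
        have hlt'' := hlt hlt'
        rw [abs_of_neg hw] at hlt''
        rcases hbi with h | h | h
        · exfalso; rw [h] at h0; nlinarith
        · exact h
        · exfalso; rw [h] at h0; nlinarith
  have hb1 : ∀ i, αstar/2 < |w i| → bstar i * w i = |w i| ∧ bstar i ^ 2 = 1 :=
    fun i => (hchar i).1
  have hb0 : ∀ i, ¬ αstar/2 < |w i| → bstar i = 0 := fun i => (hchar i).2
  set T := Finset.univ.filter (fun i : Fin n => |w i| > αstar / 2) with hT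
  set S := ∑ i ∈ T, |w i| with hSdef
  set c := (T.card : ℝ) with hcdef
  -- T is nonempty
  have hcne : T.Nonempty := by
    obtain ⟨i, hi⟩ := hnz
    refine ⟨i, ?_⟩
    rw [hT, Finset.mem_filter]
    refine ⟨Finset.mem_univ i, ?_⟩
    by_contra h
    exact hi (hb0 i h)
  have hcpos : 0 < c := by
    rw [hcdef]
    exact_mod_cast Finset.card_pos.mpr hcne
  have hSge : c * (αstar/2) ≤ S := aux_card_le_sum n w (αstar/2)
  have hSpos : 0 < S := lt_of_lt_of_le (by positivity) hSge
  have hsum1 : ∀ α : ℝ, ∑ i, (α * bstar i - w i)^2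
      = (∑ i, (w i)^2) - 2*α*S + α^2 * c := fun α => aux_sum n w (αstar/2) α bstar hb1 hb0
  -- Part (a)
  have ha : αstar = S / c := by
    have key := hmin' (S/c) (by positivity) bstar hbstar
    rw [hsum1 αstar, hsum1 (S/c)] at key
    have hc0 : c ≠ 0 := ne_of_gt hcpos
    have key2 : c * αstar ^ 2 - 2 * αstar * S + S^2 / c ≤ 0 := by
      have : (S/c)^2 * c = S^2/c := by field_simp
      have h2 : 2*(S/c)*S = 2*(S^2/c) := by field_simp
      nlinarith [key]
    have hsq : (c * αstar - S)^2 ≤ 0 := by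
      have := mul_le_mul_of_nonneg_left key2 (le_of_lt hcpos)
      have hS2 : c * (S^2/c) = S^2 := by field_simp
      nlinarith [this]
    have : c * αstar - S = 0 := by nlinarith [sq_nonneg (c * αstar - S)]
    field_simp
    linarith
  refine ⟨ha, ?_⟩
  -- Part (b)
  intro Δ hΔ hΔne
  set TΔ := Finset.univ.filter (fun i : Fin n => |w i| > Δ) with hTΔ
  set SΔ := ∑ i ∈ TΔ, |w i| with hSΔdef
  set cΔ := (TΔ.card : ℝ) with hcΔdef
  have hcΔpos : 0 < cΔ := by
    rw [hcΔdef]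
    exact_mod_cast Finset.card_pos.mpr hΔne
  have hSΔge : cΔ * Δ ≤ SΔ := aux_card_le_sum n w Δ
  have hSΔpos : 0 < SΔ := lt_of_lt_of_le (mul_pos hcΔpos hΔ) hSΔge
  -- candidate b
  set b : Fin n → ℝ := fun i => if Δ < |w i| then (if 0 ≤ w i then 1 else -1) else 0
    with hbdef
  have hbmem : ∀ i, b i ∈ ({-1, 0, 1} : Set ℝ) := by
    intro i
    rw [hbdef]
    dsimp only
    split_ifs <;> simp
  have hb1' : ∀ i, Δ < |w i| → b i * w i = |w i| ∧ b i ^ 2 = 1 := by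
    intro i hi
    rw [hbdef]
    dsimp only
    rw [if_pos hi]
    rcases le_or_gt 0 (w i) with hw | hw
    · rw [if_pos hw, abs_of_nonneg hw]; constructor <;> ring
    · rw [if_neg (not_le.mpr hw), abs_of_neg hw]; constructor <;> ring
  have hb0' : ∀ i, ¬ Δ < |w i| → b i = 0 := by
    intro i hi
    rw [hbdef]
    dsimp only
    rw [if_neg hi]
  have key := hmin' (SΔ/cΔ) (div_pos hSΔpos hcΔpos) b hbmem
  rw [hsum1 αstar, aux_sum n w Δ (SΔ/cΔ) b hb1' hb0'] at key
  have hc0 : c ≠ 0 := ne_of_gt hcpos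
  have hcΔ0 : cΔ ≠ 0 := ne_of_gt hcΔpos
  have e1 : (∑ i, (w i)^2) - 2*αstar*S + αstar^2 * c = (∑ i, (w i)^2) - S^2/c := by
    rw [ha]; field_simp; ring
  have e2 : (∑ i, (w i)^2) - 2*(SΔ/cΔ)*SΔ + (SΔ/cΔ)^2 * cΔ
      = (∑ i, (w i)^2) - SΔ^2/cΔ := by
    field_simp; ring
  rw [e1, e2] at key
  linarith
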